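/- Let {φ_n} be convex functions ℝ^d → ℝ with ∂φ_n(ℝ^d) ⊆ S for a compact convex set S ⊂ ℝ^d whose every supporting hyperplane touches the boundary of S at most once. Suppose φ_n → φ uniformly on every compact subset of ℝ^d, where φ : ℝ^d → ℝ is convex and ∇φ is a homeomorphism from Int(Y) to Int(S) for some Y ⊆ ℝ^d with nonempty interior. Then φ is differentiable everywhere in ℝ^d and sup_{x ∈ ℝ^d} sup_{y ∈ ∂φ_n(x)} ‖y − ∇φ(x)‖ → 0 as n → ∞, i.e., the subgradients converge uniformly on all of ℝ^d. -/
import Mathlib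


open scoped RealInnerProductSpace
open Filter

noncomputable section

abbrev E (d : ℕ) : Type := EuclideanSpace ℝ (Fin d)

/-- Subdifferential of a real-valued function at a point. -/
def subdiffR {d : ℕ} (f : E d → ℝ) (x : E d) : Set (E d) :=
  {ξ | ∀ y : E d, f x + ⟪ξ, y - x⟫ ≤ f y}

lemma subdiffR_nonempty {d : ℕ} {f : E d → ℝ} (hf : ConvexOn ℝ Set.univ f) (x : E d) :
    (subdiffR f x).Nonempty := by
  have hcont : Continuous f := hf.locallyLipschitz.continuous
  set U : Set (E d × ℝ) := {p | f p.1 < p.2} with hU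
  have hUopen : IsOpen U := isOpen_lt (hcont.comp continuous_fst) continuous_snd
  have hUconv : Convex ℝ U := by
    intro p hp q hq a b ha hb hab
    simp only [hU, Set.mem_setOf_eq] at hp hq ⊢
    calc f (a • p + b • q).1 = f (a • p.1 + b • q.1) := rfl
      _ ≤ a * f p.1 + b * f q.1 := hf.2 (Set.mem_univ _) (Set.mem_univ _) ha hb hab
      _ < a * p.2 + b * q.2 := by
          rcases eq_or_lt_of_le ha with rfl | ha'
          · simp only [zero_mul, zero_add]
            have : b = 1 := by linarith
            subst this; simpa using hq
          · rcases eq_or_lt_of_le hb with rfl | hb'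
            · have : a = 1 := by linarith
              subst this; simpa using hp
            · exact add_lt_add (by nlinarith) (by nlinarith)
      _ = (a • p + b • q).2 := rfl
  have hxnot : (x, f x) ∉ U := by simp [hU]
  obtain ⟨F, hF⟩ := geometric_hahn_banach_open_point hUconv hUopen hxnot
  set ℓ : E d →L[ℝ] ℝ := F.comp (ContinuousLinearMap.inl ℝ (E d) ℝ) with hℓ
  set a : ℝ := F (0, 1) with haa
  have hFsplit : ∀ y : E d, ∀ r : ℝ, F (y, r) = ℓ y + r * a := by
    intro y r
    have : (y, r) = (y, (0 : ℝ)) + r • ((0 : E d), (1 : ℝ)) := by simp [Prod.ext_iff]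
    rw [this, map_add, map_smul]
    simp [hℓ, haa, ContinuousLinearMap.inl, mul_comm]
  have key : ∀ y : E d, ∀ r : ℝ, f y < r → ℓ y + r * a < ℓ x + f x * a := by
    intro y r hr
    have := hF (y, r) (by simpa [hU] using hr)
    rwa [hFsplit, hFsplit] at this
  have ha : a < 0 := by
    have := key x (f x + 1) (by linarith)
    nlinarith
  have key2 : ∀ y : E d, ℓ y + f y * a ≤ ℓ x + f x * a := by
    intro y
    have ht : Tendsto (fun t : ℝ => ℓ y + (f y + t) * a) (nhdsWithin 0 (Set.Ioi 0))
        (nhds (ℓ y + f y * a)) := by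
      have : Continuous (fun t : ℝ => ℓ y + (f y + t) * a) :=
        continuous_const.add ((continuous_const.add continuous_id).mul continuous_const)
      have h0 := this.tendsto 0
      simp only [add_zero] at h0
      exact h0.mono_left nhdsWithin_le_nhds
    refine le_of_tendsto ht ?_
    filter_upwards [self_mem_nhdsWithin] with t (ht : 0 < t)
    exact (key y (f y + t) (by linarith)).le
  refine ⟨(InnerProductSpace.toDual ℝ (E d)).symm ((-a)⁻¹ • (ℓ : E d →L[ℝ] ℝ)), ?_⟩
  intro y
  have h2 := key2 y
  have hna : 0 < -a := by linarith
  have : ((-a)⁻¹ • (ℓ : E d →L[ℝ] ℝ)) (y - x) ≤ f y - f x := by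
    have hmap : (ℓ : E d →L[ℝ] ℝ) (y - x) = ℓ y - ℓ x := by rw [map_sub]
    simp only [ContinuousLinearMap.smul_apply, smul_eq_mul, hmap]
    rw [inv_mul_le_iff₀ hna]
    nlinarith
  rw [InnerProductSpace.toDual_symm_apply]
  linarith [this]

lemma subdiffR_segment {d : ℕ} {f : E d → ℝ} (hf : ConvexOn ℝ Set.univ f) {x y ξ : E d}
    (hx : ξ ∈ subdiffR f x) (hy : ξ ∈ subdiffR f y) {t : ℝ} (ht0 : 0 ≤ t) (ht1 : t ≤ 1) :
    ξ ∈ subdiffR f ((1 - t) • x + t • y) := by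
  intro w
  have h1 := hx w
  have h2 := hy w
  have hconv := hf.2 (Set.mem_univ x) (Set.mem_univ y) (by linarith : (0:ℝ) ≤ 1 - t) ht0
    (by ring)
  have hz : ⟪ξ, w - ((1 - t) • x + t • y)⟫ = (1 - t) * ⟪ξ, w - x⟫ + t * ⟪ξ, w - y⟫ := by
    rw [inner_sub_right, inner_add_right, real_inner_smul_right, real_inner_smul_right,
      inner_sub_right, inner_sub_right]
    ring
  simp only [smul_eq_mul] at hconv
  nlinarith [hconv]

lemma convex_subset_closure_interior {d : ℕ} {S : Set (E d)} (hSconv : Convex ℝ S)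
    (hSint : (interior S).Nonempty) : S ⊆ closure (interior S) := by
  intro s hs
  obtain ⟨y, hy⟩ := hSint
  have htend : Tendsto (fun t : ℝ => t • y + (1 - t) • s) (nhdsWithin 0 (Set.Ioi 0)) (nhds s) := by
    have hc : Continuous (fun t : ℝ => t • y + (1 - t) • s) :=
      (continuous_id.smul continuous_const).add ((continuous_const.sub continuous_id).smul
        continuous_const)
    have h0 := hc.tendsto 0
    simp only [zero_smul, sub_zero, one_smul, zero_add] at h0
    exact h0.mono_left nhdsWithin_le_nhds
  refine mem_closure_of_tendsto htend ?_
  have hev : ∀ᶠ t : ℝ in nhdsWithin 0 (Set.Ioi 0), t < 1 := by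
    have : ∀ᶠ t : ℝ in nhds 0, t < 1 := eventually_lt_nhds zero_lt_one
    exact this.filter_mono nhdsWithin_le_nhds
  filter_upwards [self_mem_nhdsWithin, hev] with t (ht : 0 < t) ht1
  exact hSconv.combo_interior_closure_mem_interior hy (subset_closure hs) ht (by linarith)
    (by ring)

lemma midpoint_mem_interior' {d : ℕ} {S : Set (E d)} (hSconv : Convex ℝ S)
    (hsupport : ∀ v : E d, v ≠ 0 → ∀ c : ℝ, (∀ s ∈ S, (⟪v, s⟫ : ℝ) ≤ c) →
      {s ∈ S | (⟪v, s⟫ : ℝ) = c}.Subsingleton)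
    (hSint : (interior S).Nonempty) {ξ₁ ξ₂ : E d} (h1 : ξ₁ ∈ S) (h2 : ξ₂ ∈ S)
    (hne : ξ₁ ≠ ξ₂) : (1/2 : ℝ) • ξ₁ + (1/2 : ℝ) • ξ₂ ∈ interior S := by
  by_contra hm
  set m := (1/2 : ℝ) • ξ₁ + (1/2 : ℝ) • ξ₂ with hmdef
  have hmS : m ∈ S := hSconv h1 h2 (by norm_num) (by norm_num) (by norm_num)
  obtain ⟨F, hF⟩ := geometric_hahn_banach_open_point hSconv.interior isOpen_interior hm
  have hcl : ∀ s ∈ S, F s ≤ F m := by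
    intro s hs
    have hsc : s ∈ closure (interior S) := convex_subset_closure_interior hSconv hSint hs
    have hclosed : IsClosed {z : E d | F z ≤ F m} := isClosed_le F.continuous continuous_const
    have hsub : closure (interior S) ⊆ {z : E d | F z ≤ F m} :=
      closure_minimal (fun z hz => (hF z hz).le) hclosed
    exact hsub hsc
  set v : E d := (InnerProductSpace.toDual ℝ (E d)).symm F with hvdef
  have hvapp : ∀ z : E d, ⟪v, z⟫ = F z := fun z => InnerProductSpace.toDual_symm_apply
  have hvne : v ≠ 0 := by
    intro h0
    obtain ⟨y, hy⟩ := hSint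
    have := hF y hy
    have hFy : F y = 0 := by rw [← hvapp, h0, inner_zero_left]
    have hFm : F m = 0 := by rw [← hvapp, h0, inner_zero_left]
    rw [hFy, hFm] at this
    exact lt_irrefl _ this
  have hsub := hsupport v hvne (F m) (fun s hs => by rw [hvapp]; exact hcl s hs)
  have hFm : F m = (1/2 : ℝ) * F ξ₁ + (1/2 : ℝ) * F ξ₂ := by
    rw [hmdef, map_add, map_smul, map_smul]; simp
  have hb1 : F ξ₁ ≤ F m := hcl _ h1
  have hb2 : F ξ₂ ≤ F m := hcl _ h2
  have he1 : F ξ₁ = F m := by linarith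
  have he2 : F ξ₂ = F m := by linarith
  exact hne (hsub ⟨h1, by rw [hvapp]; exact he1⟩ ⟨h2, by rw [hvapp]; exact he2⟩)

lemma subdiff_limit_subset {d : ℕ} {S : Set (E d)} (hScomp : IsCompact S) (hSconv : Convex ℝ S)
    (hSne : S.Nonempty)
    {φn : ℕ → E d → ℝ} (hconv : ∀ n, ConvexOn ℝ Set.univ (φn n))
    (hsub : ∀ n x, subdiffR (φn n) x ⊆ S)
    {φ : E d → ℝ}
    (hpt : ∀ z : E d, Tendsto (fun n => φn n z) atTop (nhds (φ z)))
    (x : E d) : subdiffR φ x ⊆ S := by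
  classical
  set B : E d → ℝ := fun u => sSup ((fun s => (⟪u, s⟫ : ℝ)) '' S) with hBdef
  have hBbdd : ∀ u : E d, BddAbove ((fun s => (⟪u, s⟫ : ℝ)) '' S) := by
    intro u
    exact (hScomp.image (continuous_const.inner continuous_id)).bddAbove
  have hBd : ∀ u : E d, ∀ s ∈ S, (⟪u, s⟫ : ℝ) ≤ B u := by
    intro u s hs
    exact le_csSup (hBbdd u) ⟨s, hs, rfl⟩
  have hgrow : ∀ y z : E d, φ y - φ z ≤ B (y - z) := by
    intro y z
    have hn : ∀ n : ℕ, φn n y - φn n z ≤ B (y - z) := by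
      intro n
      obtain ⟨ζ, hζ⟩ := subdiffR_nonempty (hconv n) y
      have hζS : ζ ∈ S := hsub n y hζ
      have := hζ z
      have hcm : (⟪ζ, z - y⟫ : ℝ) = -⟪y - z, ζ⟫ := by
        rw [real_inner_comm, ← neg_sub y z, inner_neg_left]
      have hB := hBd (y - z) ζ hζS
      linarith [this, hcm ▸ this]
    have htend : Tendsto (fun n => φn n y - φn n z) atTop (nhds (φ y - φ z)) :=
      (hpt y).sub (hpt z)
    exact le_of_tendsto htend (Eventually.of_forall hn)
  intro ξ hξ
  by_contra hξS
  obtain ⟨F, u, hFa, hFx⟩ := geometric_hahn_banach_closed_point hSconv hScomp.isClosed hξS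
  set w : E d := (InnerProductSpace.toDual ℝ (E d)).symm F with hwdef
  have hwapp : ∀ z : E d, ⟪w, z⟫ = F z := fun z => InnerProductSpace.toDual_symm_apply
  have h1 : (⟪ξ, w⟫ : ℝ) ≤ φ (x + w) - φ x := by
    have := hξ (x + w)
    have : φ x + ⟪ξ, x + w - x⟫ ≤ φ (x + w) := this
    simp only [add_sub_cancel_left] at this
    linarith
  have h2 : φ (x + w) - φ x ≤ B w := by
    have := hgrow (x + w) x
    simpa using this
  have h3 : B w ≤ u := by
    refine csSup_le (hSne.image _) ?_
    rintro val ⟨s, hs, rfl⟩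
    show (⟪w, s⟫ : ℝ) ≤ u
    rw [hwapp]
    exact (hFa s hs).le
  have h4 : F ξ = ⟪ξ, w⟫ := by rw [← hwapp, real_inner_comm]
  linarith

lemma subdiff_mono {d : ℕ} {f : E d → ℝ} {x y ξ η : E d} (hx : ξ ∈ subdiffR f x)
    (hy : η ∈ subdiffR f y) : 0 ≤ (⟪ξ - η, x - y⟫ : ℝ) := by
  have h1 := hx y
  have h2 := hy x
  have e1 : (⟪ξ, y - x⟫ : ℝ) = -⟪ξ, x - y⟫ := by rw [← neg_sub x y, inner_neg_right]
  have e2 : (⟪η, x - y⟫ : ℝ) = ⟪η, x - y⟫ := rfl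
  rw [inner_sub_left]
  linarith [h1, h2, e1 ▸ h1]

/-- Convex `φ_n : ℝ^d → ℝ` with subgradients in a compact convex `S` whose
supporting hyperplanes touch `Bd S` at most once, converging uniformly on every compact set
to a convex `φ` whose gradient is a homeomorphism from `Int Y` onto `Int S` (`Int Y ≠ ∅`).
Then `φ` is differentiable everywhere in `ℝ^d` and
`sup_{x ∈ ℝ^d} sup_{ξ ∈ ∂φ_n(x)} ‖ξ − ∇φ(x)‖ → 0`. -/
theorem statement19 {d : ℕ} (S : Set (E d)) (hScomp : IsCompact S) (hSconv : Convex ℝ S)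
    (hsupport : ∀ v : E d, v ≠ 0 → ∀ c : ℝ, (∀ s ∈ S, (⟪v, s⟫ : ℝ) ≤ c) →
      {s ∈ S | (⟪v, s⟫ : ℝ) = c}.Subsingleton)
    (φn : ℕ → E d → ℝ) (hconv : ∀ n, ConvexOn ℝ Set.univ (φn n))
    (hsub : ∀ n x, subdiffR (φn n) x ⊆ S)
    (φ : E d → ℝ) (hφ : ConvexOn ℝ Set.univ φ)
    (hunif : ∀ Kc : Set (E d), IsCompact Kc →
      TendstoUniformlyOn (fun n => φn n) φ atTop Kc)
    (Y : Set (E d)) (hY : (interior Y).Nonempty)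
    (gφ : E d → E d) (hgdiff : ∀ x ∈ interior Y, subdiffR φ x = {gφ x})
    (hhom : ∃ h : (interior Y) ≃ₜ (interior S), ∀ p : interior Y, (h p : E d) = gφ p) :
    (∀ x : E d, ∃ v : E d, subdiffR φ x = {v}) ∧
    (∀ ε > (0 : ℝ), ∃ N : ℕ, ∀ n ≥ N, ∀ x : E d,
      ∀ ξ ∈ subdiffR (φn n) x, ∀ v ∈ subdiffR φ x, ‖ξ - v‖ ≤ ε) := by
  classical
  obtain ⟨h, hh⟩ := hhom
  -- basic facts
  have hSintne : (interior S).Nonempty := by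
    obtain ⟨y, hy⟩ := hY
    exact ⟨(h ⟨y, hy⟩ : E d), (h ⟨y, hy⟩).2⟩
  have hSne : S.Nonempty := by
    obtain ⟨s, hs⟩ := hSintne
    exact ⟨s, interior_subset hs⟩
  have hpt : ∀ z : E d, Tendsto (fun n => φn n z) atTop (nhds (φ z)) := fun z =>
    (hunif {z} isCompact_singleton).tendsto_at (Set.mem_singleton z)
  have hφS : ∀ x : E d, subdiffR φ x ⊆ S :=
    subdiff_limit_subset hScomp hSconv hSne hconv hsub hpt
  have hφcont : Continuous φ := hφ.locallyLipschitz.continuous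
  -- gφ of the inverse homeo
  have hsymm : ∀ q : interior S, (↑(h.symm q) : E d) ∈ interior Y ∧ gφ ↑(h.symm q) = ↑q := by
    intro q
    refine ⟨(h.symm q).2, ?_⟩
    have := hh (h.symm q)
    rw [h.apply_symm_apply] at this
    exact this.symm
  -- key claim: subgradient in interior S forces the point into interior Y
  have hclaim : ∀ x : E d, ∀ m ∈ subdiffR φ x, m ∈ interior S → x ∈ interior Y := by
    intro x m hm hmS
    obtain ⟨hyY, hgy⟩ := hsymm ⟨m, hmS⟩
    set y : E d := ↑(h.symm ⟨m, hmS⟩) with hydef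
    by_cases hxy : x = y
    · rwa [hxy]
    · exfalso
      have hmy : m ∈ subdiffR φ y := by
        rw [hgdiff y hyY, hgy]; exact Set.mem_singleton m
      set g : ℝ → E d := fun t => (1 - t) • y + t • x with hgdef
      have hgc : Continuous g :=
        ((continuous_const.sub continuous_id).smul continuous_const).add
          (continuous_id.smul continuous_const)
      have hg0 : g 0 = y := by simp [hgdef]
      have hev : ∀ᶠ t : ℝ in nhdsWithin 0 (Set.Ioi 0), g t ∈ interior Y := by
        have h1 : Tendsto g (nhds 0) (nhds y) := by
          have := hgc.tendsto 0
          rwa [hg0] at this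
        exact (h1.mono_left nhdsWithin_le_nhds).eventually (isOpen_interior.eventually_mem hyY)
      have hev2 : ∀ᶠ t : ℝ in nhdsWithin 0 (Set.Ioi 0), t < 1 :=
        (eventually_lt_nhds zero_lt_one).filter_mono nhdsWithin_le_nhds
      obtain ⟨t, hgt, ht1', (ht0' : 0 < t)⟩ := (hev.and (hev2.and self_mem_nhdsWithin)).exists
      have hmz : m ∈ subdiffR φ (g t) :=
        subdiffR_segment hφ hmy hm ht0'.le ht1'.le
      have hgzm : gφ (g t) = m := by
        have := hgdiff (g t) hgt ▸ hmz
        exact (Set.mem_singleton_iff.mp this).symm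
      have hinj : g t = y := by
        have heq : h ⟨g t, hgt⟩ = h ⟨y, hyY⟩ := by
          apply Subtype.ext
          rw [hh ⟨g t, hgt⟩, hh ⟨y, hyY⟩]
          show gφ (g t) = gφ y
          rw [hgzm, hgy]
        exact congrArg Subtype.val (h.injective heq)
      have : t • x = t • y := by
        have : (1 - t) • y + t • x = y := hinj
        have hy1 : (1 - t) • y + t • y = y := by rw [← add_smul]; simp
        have := this.trans hy1.symm
        exact add_left_cancel this
      exact hxy (smul_right_injective (E d) ht0'.ne' this)
  -- Part 1
  have part1 : ∀ x : E d, ∃ v : E d, subdiffR φ x = {v} := by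
    intro x
    obtain ⟨ξ0, hξ0⟩ := subdiffR_nonempty hφ x
    have hss : (subdiffR φ x).Subsingleton := by
      intro ξ₁ h₁ ξ₂ h₂
      by_contra hne
      have hm : (1/2 : ℝ) • ξ₁ + (1/2 : ℝ) • ξ₂ ∈ subdiffR φ x := by
        intro w
        have a1 := h₁ w
        have a2 := h₂ w
        have : (⟪(1/2 : ℝ) • ξ₁ + (1/2 : ℝ) • ξ₂, w - x⟫ : ℝ) =
            (1/2 : ℝ) * ⟪ξ₁, w - x⟫ + (1/2 : ℝ) * ⟪ξ₂, w - x⟫ := by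
          rw [inner_add_left, real_inner_smul_left, real_inner_smul_left]
        rw [this]
        linarith
      have hmint : (1/2 : ℝ) • ξ₁ + (1/2 : ℝ) • ξ₂ ∈ interior S :=
        midpoint_mem_interior' hSconv hsupport hSintne (hφS x h₁) (hφS x h₂) hne
      have hxY : x ∈ interior Y := hclaim x _ hm hmint
      have := hgdiff x hxY
      rw [this] at h₁ h₂
      exact hne (h₁.trans h₂.symm)
    exact ⟨ξ0, Set.eq_singleton_iff_unique_mem.mpr ⟨hξ0, fun ξ hξ => hss hξ hξ0⟩⟩
  refine ⟨part1, ?_⟩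
  -- Part 2
  intro ε hε
  by_contra hcon
  push_neg at hcon
  obtain ⟨n, hn, x, ξ, hξ, v, hv, hεlt⟩ :
      ∃ n : ℕ → ℕ, (∀ N, N ≤ n N) ∧ ∃ x : ℕ → E d, ∃ ξ : ℕ → E d,
        (∀ N, ξ N ∈ subdiffR (φn (n N)) (x N)) ∧ ∃ v : ℕ → E d,
        (∀ N, v N ∈ subdiffR φ (x N)) ∧ (∀ N, ε < ‖ξ N - v N‖) := by
    choose n hn x ξ hξ v hv hlt using hcon
    exact ⟨n, hn, x, ξ, hξ, v, hv, hlt⟩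
  obtain ⟨F, hF⟩ := (atTop : Filter ℕ).exists_ultrafilter_le
  have hnF : Tendsto n (F : Filter ℕ) atTop := by
    have hid : Tendsto id (F : Filter ℕ) atTop := hF
    exact tendsto_atTop_mono hn hid
  -- limits along F in compact sets
  have hlim : ∀ (K : Set (E d)), IsCompact K → ∀ (g : ℕ → E d), {k | g k ∈ K} ∈ F →
      ∃ a ∈ K, Tendsto g (F : Filter ℕ) (nhds a) := by
    intro K hK g hg
    obtain ⟨a, haK, ha⟩ := hK.ultrafilter_le_nhds (F.map g) (by
      rw [Ultrafilter.coe_map, le_principal_iff]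
      exact mem_map.mpr hg)
    refine ⟨a, haK, ?_⟩
    rw [Filter.Tendsto, ← Ultrafilter.coe_map]
    exact ha
  have hξSmem : {k | ξ k ∈ S} ∈ F := Filter.univ_mem' (fun k => hsub (n k) (x k) (hξ k))
  have hvSmem : {k | v k ∈ S} ∈ F := Filter.univ_mem' (fun k => hφS (x k) (hv k))
  obtain ⟨ξl, hξlS, hξl⟩ := hlim S hScomp ξ hξSmem
  obtain ⟨vl, hvlS, hvl⟩ := hlim S hScomp v hvSmem
  have hεle : ε ≤ ‖ξl - vl‖ := by
    have ht : Tendsto (fun k => ‖ξ k - v k‖) (F : Filter ℕ) (nhds ‖ξl - vl‖) :=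
      (hξl.sub hvl).norm
    exact ge_of_tendsto ht (Eventually.of_forall fun k => (hεlt k).le)
  have hnel : ξl ≠ vl := by
    intro hcontra
    rw [hcontra, sub_self, norm_zero] at hεle
    linarith
  -- pointwise convergence along F
  have hptF : ∀ z : E d, Tendsto (fun k => φn (n k) z) (F : Filter ℕ) (nhds (φ z)) :=
    fun z => (hpt z).comp hnF
  apply hnel
  by_cases hbdd : ∃ M : ℝ, {k | x k ∈ Metric.closedBall (0 : E d) M} ∈ F
  · -- bounded case
    obtain ⟨M, hM⟩ := hbdd
    obtain ⟨xl, _, hxl⟩ := hlim _ (isCompact_closedBall (0 : E d) M) x hM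
    have hφxk : Tendsto (fun k => φ (x k)) (F : Filter ℕ) (nhds (φ xl)) :=
      (hφcont.tendsto xl).comp hxl
    have hA : Tendsto (fun k => φn (n k) (x k)) (F : Filter ℕ) (nhds (φ xl)) := by
      rw [Metric.tendsto_nhds]
      intro δ hδ
      have hu := (Metric.tendstoUniformlyOn_iff.mp (hunif _ (isCompact_closedBall (0 : E d) M))) (δ/2) (by linarith)
      have hev1 : ∀ᶠ k in (F : Filter ℕ), ∀ y ∈ Metric.closedBall (0 : E d) M,
          dist (φ y) (φn (n k) y) < δ/2 := hnF.eventually hu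
      have hev2 : ∀ᶠ k in (F : Filter ℕ), dist (φ (x k)) (φ xl) < δ/2 :=
        (Metric.tendsto_nhds.mp hφxk) (δ/2) (by linarith)
      filter_upwards [hev1, hev2, hM] with k h1 h2 (h3 : x k ∈ Metric.closedBall (0:E d) M)
      calc dist (φn (n k) (x k)) (φ xl)
          ≤ dist (φn (n k) (x k)) (φ (x k)) + dist (φ (x k)) (φ xl) := dist_triangle _ _ _
        _ < δ/2 + δ/2 := by
            have := h1 (x k) h3
            rw [dist_comm] at this
            exact add_lt_add this h2
        _ = δ := by ring
    have hξlmem : ξl ∈ subdiffR φ xl := by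
      intro z
      have hle : ∀ k, φn (n k) (x k) + ⟪ξ k, z - x k⟫ ≤ φn (n k) z := fun k => hξ k z
      have hL : Tendsto (fun k => φn (n k) (x k) + ⟪ξ k, z - x k⟫) (F : Filter ℕ)
          (nhds (φ xl + ⟪ξl, z - xl⟫)) :=
        hA.add (hξl.inner (tendsto_const_nhds.sub hxl))
      exact le_of_tendsto_of_tendsto' hL (hptF z) hle
    have hvlmem : vl ∈ subdiffR φ xl := by
      intro z
      have hle : ∀ k, φ (x k) + ⟪v k, z - x k⟫ ≤ φ z := fun k => hv k z
      have hL : Tendsto (fun k => φ (x k) + ⟪v k, z - x k⟫) (F : Filter ℕ)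
          (nhds (φ xl + ⟪vl, z - xl⟫)) :=
        hφxk.add (hvl.inner (tendsto_const_nhds.sub hxl))
      exact le_of_tendsto_of_tendsto' hL tendsto_const_nhds hle
    obtain ⟨w, hw⟩ := part1 xl
    rw [hw] at hξlmem hvlmem
    rw [Set.mem_singleton_iff.mp hξlmem, Set.mem_singleton_iff.mp hvlmem]
  · -- unbounded case
    push_neg at hbdd
    have hgt : ∀ M : ℝ, {k | M < ‖x k‖} ∈ F := by
      intro M
      have := (Ultrafilter.compl_mem_iff_notMem).mpr (hbdd M)
      refine F.toFilter.mem_of_superset this ?_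
      intro k hk
      simp only [Set.mem_compl_iff, Set.mem_setOf_eq, Metric.mem_closedBall, dist_zero_right] at hk
      exact lt_of_not_ge hk
    have htop : Tendsto (fun k => ‖x k‖) (F : Filter ℕ) atTop := by
      rw [tendsto_atTop]
      intro M
      exact Filter.mem_of_superset (hgt M) (fun k hk => (Set.mem_setOf_eq ▸ hk).le)
    have hinv : Tendsto (fun k => ‖x k‖⁻¹) (F : Filter ℕ) (nhds 0) :=
      htop.inv_tendsto_atTop
    set u : ℕ → E d := fun k => ‖x k‖⁻¹ • x k with hudef
    have husph : {k | u k ∈ Metric.sphere (0 : E d) 1} ∈ F := by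
      refine Filter.mem_of_superset (hgt 1) ?_
      intro k hk
      have hk' : (1:ℝ) < ‖x k‖ := hk
      have hne : ‖x k‖ ≠ 0 := by positivity
      simp only [Set.mem_setOf_eq, mem_sphere_zero_iff_norm, hudef, norm_smul, norm_inv,
        norm_norm]
      field_simp
    obtain ⟨ul, hulsph, hul⟩ := hlim _ (isCompact_sphere (0 : E d) 1) u husph
    have hulne : ul ≠ 0 := by
      intro h0
      rw [h0] at hulsph
      simp at hulsph
    -- key inequalities
    have hkey : ∀ s ∈ interior S, (⟪ul, s⟫ : ℝ) ≤ ⟪ul, ξl⟫ ∧ (⟪ul, s⟫ : ℝ) ≤ ⟪ul, vl⟫ := by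
      intro s hs
      obtain ⟨hyY, hgy⟩ := hsymm ⟨s, hs⟩
      set y : E d := ↑(h.symm ⟨s, hs⟩) with hydef
      have hsy : s ∈ subdiffR φ y := by
        rw [hgdiff y hyY, hgy]; exact Set.mem_singleton s
      -- scaled direction tends to ul
      have hw : Tendsto (fun k => ‖x k‖⁻¹ • (x k - y)) (F : Filter ℕ) (nhds ul) := by
        have h1 : Tendsto (fun k => ‖x k‖⁻¹ • y) (F : Filter ℕ) (nhds ((0:ℝ) • y)) :=
          hinv.smul_const y
        rw [zero_smul] at h1
        have h2 : ∀ k, ‖x k‖⁻¹ • (x k - y) = u k - ‖x k‖⁻¹ • y := by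
          intro k; rw [smul_sub]
        simp only [h2]
        simpa using hul.sub h1
      constructor
      · -- ξ part: choose subgradients of φn at y
        set η : ℕ → E d := fun k => (subdiffR_nonempty (hconv (n k)) y).choose with hηdef
        have hη : ∀ k, η k ∈ subdiffR (φn (n k)) y :=
          fun k => (subdiffR_nonempty (hconv (n k)) y).choose_spec
        have hηS : {k | η k ∈ S} ∈ F := Filter.univ_mem' (fun k => hsub (n k) y (hη k))
        obtain ⟨ηl, hηlS, hηl⟩ := hlim S hScomp η hηS
        have hηlmem : ηl ∈ subdiffR φ y := by
          intro z
          have hle : ∀ k, φn (n k) y + ⟪η k, z - y⟫ ≤ φn (n k) z := fun k => hη k z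
          have hL : Tendsto (fun k => φn (n k) y + ⟪η k, z - y⟫) (F : Filter ℕ)
              (nhds (φ y + ⟪ηl, z - y⟫)) :=
            (hptF y).add (hηl.inner tendsto_const_nhds)
          exact le_of_tendsto_of_tendsto' hL (hptF z) hle
        have hηls : ηl = s := by
          rw [hgdiff y hyY] at hηlmem
          rw [Set.mem_singleton_iff.mp hηlmem, hgy]
        have hmono : ∀ k, 0 ≤ (⟪ξ k - η k, ‖x k‖⁻¹ • (x k - y)⟫ : ℝ) := by
          intro k
          rw [real_inner_smul_right]
          have := subdiff_mono (hξ k) (hη k)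
          positivity
        have hL : Tendsto (fun k => (⟪ξ k - η k, ‖x k‖⁻¹ • (x k - y)⟫ : ℝ)) (F : Filter ℕ)
            (nhds ⟪ξl - ηl, ul⟫) := (hξl.sub hηl).inner hw
        have h0 : (0:ℝ) ≤ ⟪ξl - ηl, ul⟫ :=
          ge_of_tendsto hL (Eventually.of_forall hmono)
        rw [hηls, inner_sub_left] at h0
        have h5 : (⟪s, ul⟫ : ℝ) ≤ ⟪ξl, ul⟫ := by linarith
        linarith [real_inner_comm ul s, real_inner_comm ul ξl, h5]
      · have hmono : ∀ k, 0 ≤ (⟪v k - s, ‖x k‖⁻¹ • (x k - y)⟫ : ℝ) := by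
          intro k
          rw [real_inner_smul_right]
          have := subdiff_mono (hv k) hsy
          positivity
        have hL : Tendsto (fun k => (⟪v k - s, ‖x k‖⁻¹ • (x k - y)⟫ : ℝ)) (F : Filter ℕ)
            (nhds ⟪vl - s, ul⟫) := (hvl.sub tendsto_const_nhds).inner hw
        have h0 : (0:ℝ) ≤ ⟪vl - s, ul⟫ :=
          ge_of_tendsto hL (Eventually.of_forall hmono)
        rw [inner_sub_left] at h0
        have h5 : (⟪s, ul⟫ : ℝ) ≤ ⟪vl, ul⟫ := by linarith
        linarith [real_inner_comm ul s, real_inner_comm ul vl, h5]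
    -- extend to all of S by density
    have hkeyS : ∀ s ∈ S, (⟪ul, s⟫ : ℝ) ≤ ⟪ul, ξl⟫ ∧ (⟪ul, s⟫ : ℝ) ≤ ⟪ul, vl⟫ := by
      intro s hs
      have hC : IsClosed {z : E d | (⟪ul, z⟫ : ℝ) ≤ ⟪ul, ξl⟫ ∧ (⟪ul, z⟫ : ℝ) ≤ ⟪ul, vl⟫} := by
        rw [Set.setOf_and]
        exact IsClosed.inter
          (isClosed_le (continuous_const.inner continuous_id') continuous_const)
          (isClosed_le (continuous_const.inner continuous_id') continuous_const)
      have hsub' : closure (interior S) ⊆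
          {z : E d | (⟪ul, z⟫ : ℝ) ≤ ⟪ul, ξl⟫ ∧ (⟪ul, z⟫ : ℝ) ≤ ⟪ul, vl⟫} :=
        closure_minimal (fun z hz => hkey z hz) hC
      exact hsub' (convex_subset_closure_interior hSconv hSintne hs)
    have hceq : (⟪ul, vl⟫ : ℝ) = ⟪ul, ξl⟫ :=
      le_antisymm (hkeyS vl hvlS).1 (hkeyS ξl hξlS).2
    have hss := hsupport ul hulne (⟪ul, ξl⟫) (fun s hs => (hkeyS s hs).1)
    exact hss ⟨hξlS, rfl⟩ ⟨hvlS, hceq⟩
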